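/- For α ∈ [0,π], in the weak coin flipping protocol with states |ψ_a⟩ as defined, any cheating strategy of Alice wins with probability at most (1/2)(1 + cos²(α/2)). Concretely: for any density matrix σ on ℂ³, (1/2)(F(σ,ρ₀) + F(σ,ρ₁)) ≤ (1/2)(1 + cos²(α/2)), where ρ_a = cos²(α/2)|0⟩⟨0| + sin²(α/2)|a+1⟩⟨a+1|. -/

import Mathlib

open Matrix
open scoped ComplexOrder

open Classical in
/-- Square root of a positive semidefinite matrix (junk value `0` otherwise). -/
noncomputable def msqrt {n : Type*} [Fintype n] [DecidableEq n] (A : Matrix n n ℂ) :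
    Matrix n n ℂ :=
  if h : A.PosSemidef then
    (h.1.eigenvectorUnitary : Matrix n n ℂ) *
      diagonal ((↑) ∘ Real.sqrt ∘ h.1.eigenvalues) *
      (star h.1.eigenvectorUnitary : Matrix n n ℂ)
  else 0

/-- Fidelity `F(ρ,σ) = (tr √(√ρ σ √ρ))²`. -/
noncomputable def fid {n : Type*} [Fintype n] [DecidableEq n] (ρ σ : Matrix n n ℂ) : ℝ :=
  ((msqrt (msqrt ρ * σ * msqrt ρ)).trace).re ^ 2

lemma trace_unitary_conj {n : Type*} [Fintype n] [DecidableEq n]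
    (U : Matrix.unitaryGroup n ℂ) (D : Matrix n n ℂ) :
    ((U : Matrix n n ℂ) * D * (star U : Matrix n n ℂ)).trace = D.trace := by
  rw [Matrix.trace_mul_cycle, Matrix.mem_unitaryGroup_iff'.mp U.2, Matrix.one_mul]

lemma msqrt_posSemidef {n : Type*} [Fintype n] [DecidableEq n] {A : Matrix n n ℂ}
    (hA : A.PosSemidef) : (msqrt A).PosSemidef := by
  rw [msqrt, dif_pos hA]
  have hD : (diagonal (((↑) : ℝ → ℂ) ∘ Real.sqrt ∘ hA.1.eigenvalues)).PosSemidef :=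
    Matrix.PosSemidef.diagonal fun i => by
      simpa using Complex.zero_le_real.mpr (Real.sqrt_nonneg (hA.1.eigenvalues i))
  have := hD.mul_mul_conjTranspose_same (hA.1.eigenvectorUnitary : Matrix n n ℂ)
  rwa [← Matrix.star_eq_conjTranspose] at this

lemma msqrt_mul_self {n : Type*} [Fintype n] [DecidableEq n] {A : Matrix n n ℂ}
    (hA : A.PosSemidef) : msqrt A * msqrt A = A := by
  have hUU : (star hA.1.eigenvectorUnitary : Matrix n n ℂ) *
      (hA.1.eigenvectorUnitary : Matrix n n ℂ) = 1 :=
    Matrix.mem_unitaryGroup_iff'.mp hA.1.eigenvectorUnitary.2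
  rw [msqrt, dif_pos hA]
  conv_rhs => rw [hA.1.spectral_theorem, Unitary.conjStarAlgAut_apply]
  calc _ = (hA.1.eigenvectorUnitary : Matrix n n ℂ) *
        (diagonal (((↑) : ℝ → ℂ) ∘ Real.sqrt ∘ hA.1.eigenvalues) *
          ((star hA.1.eigenvectorUnitary : Matrix n n ℂ) *
            (hA.1.eigenvectorUnitary : Matrix n n ℂ)) *
          diagonal (((↑) : ℝ → ℂ) ∘ Real.sqrt ∘ hA.1.eigenvalues)) *
        (star hA.1.eigenvectorUnitary : Matrix n n ℂ) := by simp only [Matrix.mul_assoc]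
    _ = _ := by
      rw [hUU, Matrix.mul_one, diagonal_mul_diagonal]
      congr 3
      funext i
      simp [← Complex.ofReal_mul, Real.mul_self_sqrt (hA.eigenvalues_nonneg i)]

lemma trace_msqrt_sq_le (M : Matrix (Fin 3) (Fin 3) ℂ) (hM : M.PosSemidef) (hdet : M.det = 0) :
    ((msqrt M).trace).re ^ 2 ≤
      M.trace.re + 2 * Real.sqrt ((M.trace.re ^ 2 - ((M * M).trace).re) / 2) := by
  set l := hM.1.eigenvalues with hl
  set U := hM.1.eigenvectorUnitary with hU
  set D : Matrix (Fin 3) (Fin 3) ℂ := Matrix.diagonal (RCLike.ofReal ∘ l) with hD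
  have hnn : ∀ i, 0 ≤ l i := hM.eigenvalues_nonneg
  have hUU : (star U : Matrix (Fin 3) (Fin 3) ℂ) * (U : Matrix (Fin 3) (Fin 3) ℂ) = 1 :=
    Matrix.mem_unitaryGroup_iff'.mp U.2
  have h1 : ((msqrt M).trace).re = ∑ i, Real.sqrt (l i) := by
    rw [msqrt, dif_pos hM]
    rw [trace_unitary_conj, Matrix.trace_diagonal]
    simp [Complex.ofReal_re]
    congr
  have h2 : M.trace.re = ∑ i, l i := by
    conv_lhs => rw [hM.1.spectral_theorem, Unitary.conjStarAlgAut_apply]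
    rw [trace_unitary_conj, Matrix.trace_diagonal]
    simp
    congr
  have h3 : ((M * M).trace).re = ∑ i, (l i) ^ 2 := by
    have key : M * M = (U : Matrix (Fin 3) (Fin 3) ℂ) * (D * D) *
        (star U : Matrix (Fin 3) (Fin 3) ℂ) := by
      conv_lhs => rw [hM.1.spectral_theorem, Unitary.conjStarAlgAut_apply]
      simp only [Matrix.mul_assoc]
      rw [show (star U : Matrix (Fin 3) (Fin 3) ℂ) *
          ((U : Matrix (Fin 3) (Fin 3) ℂ) * (D * (star U : Matrix (Fin 3) (Fin 3) ℂ))) =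
          D * (star U : Matrix (Fin 3) (Fin 3) ℂ) by
        rw [← Matrix.mul_assoc, hUU, Matrix.one_mul]]
    rw [key, trace_unitary_conj, hD, Matrix.diagonal_mul_diagonal, Matrix.trace_diagonal]
    rw [Complex.re_sum]
    refine Finset.sum_congr rfl fun i _ => ?_
    simp only [Function.comp_apply]; norm_cast; simp [RCLike.ofReal_alg]; ring
  have h4 : ∃ i, l i = 0 := by
    have hp := hM.1.det_eq_prod_eigenvalues
    rw [hdet] at hp
    obtain ⟨i, -, hi⟩ := Finset.prod_eq_zero_iff.mp hp.symm
    exact ⟨i, Complex.ofReal_eq_zero.mp hi⟩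
  rw [h1, h2, h3]
  rw [Fin.sum_univ_three, Fin.sum_univ_three, Fin.sum_univ_three]
  obtain ⟨i, hi⟩ := h4
  have e01 : Real.sqrt (l 0) * Real.sqrt (l 1) = Real.sqrt (l 0 * l 1) :=
    (Real.sqrt_mul (hnn 0) _).symm
  have e02 : Real.sqrt (l 0) * Real.sqrt (l 2) = Real.sqrt (l 0 * l 2) :=
    (Real.sqrt_mul (hnn 0) _).symm
  have e12 : Real.sqrt (l 1) * Real.sqrt (l 2) = Real.sqrt (l 1 * l 2) :=
    (Real.sqrt_mul (hnn 1) _).symm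
  have s0 := Real.sq_sqrt (hnn 0)
  have s1 := Real.sq_sqrt (hnn 1)
  have s2 := Real.sq_sqrt (hnn 2)
  fin_cases i
  · rw [show l 0 = 0 from hi,
      show ((0:ℝ) + l 1 + l 2) ^ 2 - (0 ^ 2 + (l 1) ^ 2 + (l 2) ^ 2) = 2 * (l 1 * l 2) by ring,
      show (2 : ℝ) * (l 1 * l 2) / 2 = l 1 * l 2 by ring]
    simp only [Real.sqrt_zero]
    nlinarith [e12]
  · rw [show l 1 = 0 from hi,
      show (l 0 + (0:ℝ) + l 2) ^ 2 - ((l 0) ^ 2 + 0 ^ 2 + (l 2) ^ 2) = 2 * (l 0 * l 2) by ring,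
      show (2 : ℝ) * (l 0 * l 2) / 2 = l 0 * l 2 by ring]
    simp only [Real.sqrt_zero]
    nlinarith [e02]
  · rw [show l 2 = 0 from hi,
      show (l 0 + l 1 + (0:ℝ)) ^ 2 - ((l 0) ^ 2 + (l 1) ^ 2 + 0 ^ 2) = 2 * (l 0 * l 1) by ring,
      show (2 : ℝ) * (l 0 * l 1) / 2 = l 0 * l 1 by ring]
    simp only [Real.sqrt_zero]
    nlinarith [e01]

lemma diag_nonneg' {n : Type*} [Fintype n] [DecidableEq n]
    {σ : Matrix n n ℂ} (hσ : σ.PosSemidef) (i : n) : 0 ≤ (σ i i).re := by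
  have := hσ.diag_nonneg (i := i)
  exact (Complex.le_def.mp this).1

lemma herm_entry {n : Type*} [Fintype n] {σ : Matrix n n ℂ} (h : σ.IsHermitian)
    (i j : n) : σ j i = starRingEnd ℂ (σ i j) := by
  have := congrFun (congrFun h.symm j) i
  rwa [Matrix.conjTranspose_apply] at this


lemma real_final (d0 d1 d2 x0 x1 x2 n01 n02 n12 t : ℝ)
    (hd0 : 0 ≤ d0) (hd1 : 0 ≤ d1) (hd2 : 0 ≤ d2)
    (hx0 : 0 ≤ x0) (hx1 : 0 ≤ x1) (hx2 : 0 ≤ x2)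
    (hn01 : 0 ≤ n01) (hn02 : 0 ≤ n02) (hn12 : 0 ≤ n12)
    (ht : t ≤ d0*x0 + d1*x1 + d2*x2 +
      2 * Real.sqrt (((d0*x0 + d1*x1 + d2*x2)^2 -
        ((d0*x0)^2 + (d1*x1)^2 + (d2*x2)^2 + 2*(d0*d1*n01 + d0*d2*n02 + d1*d2*n12)))/2)) :
    t ≤ (Real.sqrt d0 * Real.sqrt x0 + Real.sqrt d1 * Real.sqrt x1
        + Real.sqrt d2 * Real.sqrt x2)^2 := by
  set A := d0 * x0 with hA
  set B := d1 * x1 with hB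
  set C := d2 * x2 with hC
  have hAn : 0 ≤ A := mul_nonneg hd0 hx0
  have hBn : 0 ≤ B := mul_nonneg hd1 hx1
  have hCn : 0 ≤ C := mul_nonneg hd2 hx2
  set E : ℝ := ((A + B + C)^2 - (A^2 + B^2 + C^2 + 2*(d0*d1*n01 + d0*d2*n02 + d1*d2*n12)))/2
    with hE
  have hEle : E ≤ A * B + A * C + B * C := by
    rw [hE, hA, hB, hC]
    nlinarith [mul_nonneg (mul_nonneg hd0 hd1) hn01, mul_nonneg (mul_nonneg hd0 hd2) hn02,
      mul_nonneg (mul_nonneg hd1 hd2) hn12]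
  have hsqrtE : Real.sqrt E ≤ Real.sqrt (A * B) + Real.sqrt (A * C) + Real.sqrt (B * C) := by
    have h1 : Real.sqrt E ≤ Real.sqrt (A * B + A * C + B * C) := Real.sqrt_le_sqrt (by linarith)
    refine h1.trans ?_
    have h2 : A * B + A * C + B * C ≤
        (Real.sqrt (A * B) + Real.sqrt (A * C) + Real.sqrt (B * C)) ^ 2 := by
      nlinarith [Real.sq_sqrt (mul_nonneg hAn hBn), Real.sq_sqrt (mul_nonneg hAn hCn),
        Real.sq_sqrt (mul_nonneg hBn hCn),
        mul_nonneg (Real.sqrt_nonneg (A*B)) (Real.sqrt_nonneg (A*C)),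
        mul_nonneg (Real.sqrt_nonneg (A*B)) (Real.sqrt_nonneg (B*C)),
        mul_nonneg (Real.sqrt_nonneg (A*C)) (Real.sqrt_nonneg (B*C))]
    calc Real.sqrt (A * B + A * C + B * C)
        ≤ Real.sqrt ((Real.sqrt (A * B) + Real.sqrt (A * C) + Real.sqrt (B * C)) ^ 2) :=
          Real.sqrt_le_sqrt h2
      _ = _ := Real.sqrt_sq (by positivity)
  have sab : Real.sqrt (A * B) = Real.sqrt d0 * Real.sqrt x0 * (Real.sqrt d1 * Real.sqrt x1) := by
    rw [hA, hB, ← Real.sqrt_mul hd0 x0, ← Real.sqrt_mul hd1 x1, ← Real.sqrt_mul hAn]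
  have sac : Real.sqrt (A * C) = Real.sqrt d0 * Real.sqrt x0 * (Real.sqrt d2 * Real.sqrt x2) := by
    rw [hA, hC, ← Real.sqrt_mul hd0 x0, ← Real.sqrt_mul hd2 x2, ← Real.sqrt_mul hAn]
  have sbc : Real.sqrt (B * C) = Real.sqrt d1 * Real.sqrt x1 * (Real.sqrt d2 * Real.sqrt x2) := by
    rw [hB, hC, ← Real.sqrt_mul hd1 x1, ← Real.sqrt_mul hd2 x2, ← Real.sqrt_mul hBn]
  have qa : (Real.sqrt d0 * Real.sqrt x0) ^ 2 = A := by
    rw [mul_pow, Real.sq_sqrt hd0, Real.sq_sqrt hx0]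
  have qb : (Real.sqrt d1 * Real.sqrt x1) ^ 2 = B := by
    rw [mul_pow, Real.sq_sqrt hd1, Real.sq_sqrt hx1]
  have qc : (Real.sqrt d2 * Real.sqrt x2) ^ 2 = C := by
    rw [mul_pow, Real.sq_sqrt hd2, Real.sq_sqrt hx2]
  have expand2 : (Real.sqrt d0 * Real.sqrt x0 + Real.sqrt d1 * Real.sqrt x1
      + Real.sqrt d2 * Real.sqrt x2)^2
      = A + B + C + 2 * (Real.sqrt (A * B) + Real.sqrt (A * C) + Real.sqrt (B * C)) := by
    rw [sab, sac, sbc, ← qa, ← qb, ← qc]; ring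
  rw [expand2]
  linarith

lemma fid_le (σ : Matrix (Fin 3) (Fin 3) ℂ) (hσ : σ.PosSemidef)
    (d : Fin 3 → ℝ) (hd : ∀ i, 0 ≤ d i) (hd0 : ∃ i, d i = 0) :
    fid σ (Matrix.diagonal (fun i => (d i : ℂ))) ≤
      (∑ i, Real.sqrt (d i) * Real.sqrt ((σ i i).re)) ^ 2 := by
  set ρ : Matrix (Fin 3) (Fin 3) ℂ := Matrix.diagonal (fun i => (d i : ℂ)) with hρ
  have hρP : ρ.PosSemidef := by
    refine Matrix.PosSemidef.diagonal fun i => ?_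
    simpa using Complex.zero_le_real.mpr (hd i)
  set R : Matrix (Fin 3) (Fin 3) ℂ := msqrt σ with hRdef
  have hRP : R.PosSemidef := msqrt_posSemidef hσ
  have hRH : Rᴴ = R := hRP.1
  have hmsq : msqrt σ = R := rfl
  have hRR : R * R = σ := msqrt_mul_self hσ
  set M : Matrix (Fin 3) (Fin 3) ℂ := R * ρ * R with hMdef
  have hMP : M.PosSemidef := by
    have := hρP.conjTranspose_mul_mul_same R
    rwa [hRH] at this
  have hdet : M.det = 0 := by
    obtain ⟨i, hi⟩ := hd0
    have hρdet : ρ.det = 0 := by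
      rw [hρ, Matrix.det_diagonal]
      exact Finset.prod_eq_zero (Finset.mem_univ i) (by simp [hi])
    simp [hMdef, Matrix.det_mul, hρdet]
  have hfid : fid σ ρ = ((msqrt M).trace).re ^ 2 := by rw [fid, hmsq]
  have key := trace_msqrt_sq_le M hMP hdet
  -- traces
  have htr : M.trace = (σ * ρ).trace := by
    rw [hMdef, Matrix.mul_assoc, Matrix.trace_mul_comm, Matrix.mul_assoc, hRR,
      Matrix.trace_mul_comm]
  have htr2 : (M * M).trace = (ρ * σ * ρ * σ).trace := by
    have e : M * M = R * (ρ * σ * ρ) * R := by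
      rw [hMdef]
      calc R * ρ * R * (R * ρ * R) = R * (ρ * (R * R) * ρ) * R := by
            simp only [Matrix.mul_assoc]
        _ = R * (ρ * σ * ρ) * R := by rw [hRR]
    rw [e, Matrix.mul_assoc, Matrix.trace_mul_comm, Matrix.mul_assoc, hRR]
  -- entrywise values
  obtain ⟨x0, hx0⟩ : ∃ r : ℝ, σ 0 0 = (r : ℂ) :=
    ⟨_, (Complex.conj_eq_iff_re.mp (herm_entry hσ.1 0 0).symm).symm⟩
  obtain ⟨x1, hx1⟩ : ∃ r : ℝ, σ 1 1 = (r : ℂ) :=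
    ⟨_, (Complex.conj_eq_iff_re.mp (herm_entry hσ.1 1 1).symm).symm⟩
  obtain ⟨x2, hx2⟩ : ∃ r : ℝ, σ 2 2 = (r : ℂ) :=
    ⟨_, (Complex.conj_eq_iff_re.mp (herm_entry hσ.1 2 2).symm).symm⟩
  have hx0' : (σ 0 0).re = x0 := by rw [hx0]; simp
  have hx1' : (σ 1 1).re = x1 := by rw [hx1]; simp
  have hx2' : (σ 2 2).re = x2 := by rw [hx2]; simp
  have h10 : σ 1 0 = starRingEnd ℂ (σ 0 1) := herm_entry hσ.1 0 1
  have h20 : σ 2 0 = starRingEnd ℂ (σ 0 2) := herm_entry hσ.1 0 2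
  have h21 : σ 2 1 = starRingEnd ℂ (σ 1 2) := herm_entry hσ.1 1 2
  have et1 : M.trace.re = d 0 * x0 + d 1 * x1 + d 2 * x2 := by
    rw [htr]
    have e : (σ * ρ).trace = σ 0 0 * (d 0 : ℂ) + σ 1 1 * (d 1 : ℂ) + σ 2 2 * (d 2 : ℂ) := by
      simp [hρ, Matrix.trace, Matrix.diag, Matrix.mul_apply, Matrix.diagonal, Fin.sum_univ_three]
    rw [e, hx0, hx1, hx2]
    push_cast
    simp
    ring
  have et2 : ((M * M).trace).re
      = (d 0 * x0) ^ 2 + (d 1 * x1) ^ 2 + (d 2 * x2) ^ 2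
        + 2 * (d 0 * d 1 * Complex.normSq (σ 0 1) + d 0 * d 2 * Complex.normSq (σ 0 2)
               + d 1 * d 2 * Complex.normSq (σ 1 2)) := by
    rw [htr2]
    have expand : (ρ * σ * ρ * σ).trace
        = ∑ i : Fin 3, ∑ k : Fin 3, (d i : ℂ) * σ i k * (d k : ℂ) * σ k i := by
      simp [hρ, Matrix.trace, Matrix.diag, Matrix.mul_apply, Matrix.diagonal, Fin.sum_univ_three]
    rw [expand, Fin.sum_univ_three]
    simp only [Fin.sum_univ_three, h10, h20, h21, hx0, hx1, hx2]
    simp only [Complex.add_re, Complex.mul_re, Complex.mul_im, Complex.ofReal_re,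
      Complex.ofReal_im, Complex.conj_re, Complex.conj_im, Complex.normSq_apply]
    ring
  rw [et1, et2] at key
  have hx0n : 0 ≤ x0 := hx0' ▸ diag_nonneg' hσ 0
  have hx1n : 0 ≤ x1 := hx1' ▸ diag_nonneg' hσ 1
  have hx2n : 0 ≤ x2 := hx2' ▸ diag_nonneg' hσ 2
  rw [hfid, Fin.sum_univ_three, hx0', hx1', hx2']
  exact real_final (d 0) (d 1) (d 2) x0 x1 x2 _ _ _ _
    (hd 0) (hd 1) (hd 2) hx0n hx1n hx2n
    (Complex.normSq_nonneg _) (Complex.normSq_nonneg _) (Complex.normSq_nonneg _) key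

/-- Alice's cheating bound. For any density matrix `σ` on `ℂ³`,
`(1/2)(F(σ,ρ₀) + F(σ,ρ₁)) ≤ (1/2)(1 + cos²(α/2))` where `ρ_a` are the reduced honest states. -/
theorem alice_cheating_bound (α : ℝ) (hα : α ∈ Set.Icc 0 Real.pi)
    (ρ₀ ρ₁ : Matrix (Fin 3) (Fin 3) ℂ)
    (h₀ : ρ₀ = (Real.cos (α / 2) : ℂ) ^ 2 • Matrix.single 0 0 1 +
               (Real.sin (α / 2) : ℂ) ^ 2 • Matrix.single 1 1 1)
    (h₁ : ρ₁ = (Real.cos (α / 2) : ℂ) ^ 2 • Matrix.single 0 0 1 +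
               (Real.sin (α / 2) : ℂ) ^ 2 • Matrix.single 2 2 1) :
    ∀ σ : Matrix (Fin 3) (Fin 3) ℂ, σ.PosSemidef → σ.trace = 1 →
      (1 / 2) * (fid σ ρ₀ + fid σ ρ₁) ≤ (1 / 2) * (1 + Real.cos (α / 2) ^ 2) := by
  intro σ hσ htr
  obtain ⟨hα0, hαπ⟩ := hα
  set c := Real.cos (α / 2) with hcdef
  set s := Real.sin (α / 2) with hsdef
  have hc : 0 ≤ c := Real.cos_nonneg_of_mem_Icc
    ⟨by linarith [Real.pi_pos], by linarith⟩
  have hs : 0 ≤ s := Real.sin_nonneg_of_nonneg_of_le_pi (by linarith)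
    (by linarith [Real.pi_pos])
  have hcs : s ^ 2 + c ^ 2 = 1 := Real.sin_sq_add_cos_sq _
  -- rewrite ρ₀, ρ₁ as diagonal matrices
  have e₀ : ρ₀ = Matrix.diagonal (fun i => ((![c^2, s^2, 0] : Fin 3 → ℝ) i : ℂ)) := by
    rw [h₀]; ext i j
    fin_cases i <;> fin_cases j <;>
      simp [Matrix.single, Matrix.diagonal] <;> push_cast <;> ring
  have e₁ : ρ₁ = Matrix.diagonal (fun i => ((![c^2, 0, s^2] : Fin 3 → ℝ) i : ℂ)) := by
    rw [h₁]; ext i j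
    fin_cases i <;> fin_cases j <;>
      simp [Matrix.single, Matrix.diagonal] <;> push_cast <;> ring
  have hb₀ := fid_le σ hσ ![c^2, s^2, 0]
    (by intro i; fin_cases i <;> simp [sq_nonneg]) ⟨2, rfl⟩
  have hb₁ := fid_le σ hσ ![c^2, 0, s^2]
    (by intro i; fin_cases i <;> simp [sq_nonneg]) ⟨1, rfl⟩
  rw [← e₀] at hb₀
  rw [← e₁] at hb₁
  rw [Fin.sum_univ_three] at hb₀ hb₁
  simp only [Matrix.cons_val_zero, Matrix.cons_val_one, Matrix.head_cons,
    Matrix.cons_val_two, Matrix.tail_cons, Real.sqrt_zero, zero_mul, add_zero,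
    Real.sqrt_sq hc, Real.sqrt_sq hs] at hb₀ hb₁
  -- trace condition
  have hx0n : 0 ≤ (σ 0 0).re := diag_nonneg' hσ 0
  have hx1n : 0 ≤ (σ 1 1).re := diag_nonneg' hσ 1
  have hx2n : 0 ≤ (σ 2 2).re := diag_nonneg' hσ 2
  have hsum : (σ 0 0).re + (σ 1 1).re + (σ 2 2).re = 1 := by
    have : σ.trace = σ 0 0 + σ 1 1 + σ 2 2 := by
      simp [Matrix.trace, Matrix.diag, Fin.sum_univ_three]
    rw [this] at htr
    have := congrArg Complex.re htr
    simpa using this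
  set p := Real.sqrt ((σ 0 0).re) with hp
  set q := Real.sqrt ((σ 1 1).re) with hq
  set r := Real.sqrt ((σ 2 2).re) with hr
  have hpn : 0 ≤ p := Real.sqrt_nonneg _
  have hqn : 0 ≤ q := Real.sqrt_nonneg _
  have hrn : 0 ≤ r := Real.sqrt_nonneg _
  have hp2 : p ^ 2 = (σ 0 0).re := Real.sq_sqrt hx0n
  have hq2 : q ^ 2 = (σ 1 1).re := Real.sq_sqrt hx1n
  have hr2 : r ^ 2 = (σ 2 2).re := Real.sq_sqrt hx2n
  have hpqr : p ^ 2 + q ^ 2 + r ^ 2 = 1 := by rw [hp2, hq2, hr2]; exact hsum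
  have key : (c * p + s * q) ^ 2 + (c * p + s * r) ^ 2 ≤ 1 + c ^ 2 := by
    nlinarith [sq_nonneg (c * (q + r) - s * p), sq_nonneg (c * (q - r)),
      mul_nonneg hc hs, mul_nonneg hpn hqn, mul_nonneg hpn hrn]
  nlinarith [hb₀, hb₁, key]
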